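/- Fix ε ∈ (0,1) and let E = {s(p′, −1) : p′ ∈ ℝ^{n−1}, 0 ≤ s ≤ (1 + |p′|²/(2(1−ε)))⁻¹} ⊂ ℝⁿ. Then E equals the closed ellipsoid {(q′, q_n) : (2/(1−ε))|q′|² + 4(q_n + 1/2)² ≤ 1}, and hence its Lebesgue measure is (1−ε)^{(n−1)/2} |B(0,1)| / 2^{(n+1)/2}, where |B(0,1)| is the volume of the unit ball in ℝⁿ. -/

import Mathlib

open MeasureTheory Pointwise

noncomputable def diagMap {n : ℕ} (c : Fin n → ℝ) :
    EuclideanSpace ℝ (Fin n) →ₗ[ℝ] EuclideanSpace ℝ (Fin n) where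
  toFun q := WithLp.toLp 2 (fun i => c i * q i)
  map_add' x y := by ext i; simp [mul_add]
  map_smul' r x := by ext i; simp; ring

lemma diagMap_apply {n : ℕ} (c : Fin n → ℝ) (q : EuclideanSpace ℝ (Fin n)) (i : Fin n) :
    diagMap c q i = c i * q i := rfl

lemma det_diagMap {n : ℕ} (c : Fin n → ℝ) : LinearMap.det (diagMap c) = ∏ i, c i := by
  rw [← LinearMap.det_toMatrix (EuclideanSpace.basisFun (Fin n) ℝ).toBasis]
  have : LinearMap.toMatrix (EuclideanSpace.basisFun (Fin n) ℝ).toBasis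
      (EuclideanSpace.basisFun (Fin n) ℝ).toBasis (diagMap c) = Matrix.diagonal c := by
    ext i j
    simp [LinearMap.toMatrix_apply, diagMap_apply, EuclideanSpace.basisFun_apply,
      Matrix.diagonal, EuclideanSpace.single_apply]
  rw [this, Matrix.det_diagonal]

lemma norm_le_one_iff {n : ℕ} (x : EuclideanSpace ℝ (Fin n)) :
    ‖x‖ ≤ 1 ↔ ∑ i, x i ^ 2 ≤ 1 := by
  rw [EuclideanSpace.norm_eq]
  simp only [Real.norm_eq_abs, sq_abs]
  rw [show (1:ℝ) = Real.sqrt 1 by simp, Real.sqrt_le_sqrt_iff (by positivity), Real.sqrt_one]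

lemma mem_image_diag {n : ℕ} {c : Fin n → ℝ} (hc : ∀ i, c i ≠ 0)
    (v : EuclideanSpace ℝ (Fin n)) (q : EuclideanSpace ℝ (Fin n)) :
    q ∈ (fun x => v + diagMap c x) '' Metric.closedBall 0 1 ↔
      ∑ i, ((q i - v i) / c i) ^ 2 ≤ 1 := by
  constructor
  · rintro ⟨x, hx, rfl⟩
    simp only [Metric.mem_closedBall, dist_zero_right] at hx
    have : ∀ i, ((v + diagMap c x) i - v i) / c i = x i := by
      intro i
      have : (v + diagMap c x) i = v i + c i * x i := rfl
      rw [this, add_sub_cancel_left, mul_div_cancel_left₀ _ (hc i)]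
    simp only [this]
    exact (norm_le_one_iff x).mp hx
  · intro hq
    refine ⟨WithLp.toLp 2 (fun i => (q i - v i) / c i), ?_, ?_⟩
    · simpa [Metric.mem_closedBall, dist_zero_right, norm_le_one_iff] using hq
    · ext i
      have : diagMap c (WithLp.toLp 2 (fun i => (q i - v i) / c i)) i
          = c i * ((q i - v i) / c i) := rfl
      show v i + diagMap c (WithLp.toLp 2 (fun i => (q i - v i) / c i)) i = q i
      rw [this, mul_div_cancel₀ _ (hc i)]
      ring

theorem stmt17 {m : ℕ} (ε : ℝ) (hε0 : 0 < ε) (hε1 : ε < 1)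
    (E : Set (EuclideanSpace ℝ (Fin (m + 1))))
    (hE : E = {q | ∃ (p' : EuclideanSpace ℝ (Fin m)) (s : ℝ),
      0 ≤ s ∧ s ≤ (1 + ‖p'‖ ^ 2 / (2 * (1 - ε)))⁻¹ ∧
      (∀ i : Fin m, q i.castSucc = s * p' i) ∧ q (Fin.last m) = -s}) :
    E = {q : EuclideanSpace ℝ (Fin (m + 1)) |
          (2 / (1 - ε)) * (∑ i : Fin m, (q i.castSucc) ^ 2)
            + 4 * (q (Fin.last m) + 1 / 2) ^ 2 ≤ 1} ∧
      volume E = ENNReal.ofReal ((1 - ε) ^ ((m : ℝ) / 2)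
          * (volume (Metric.ball (0 : EuclideanSpace ℝ (Fin (m + 1))) 1)).toReal
          / 2 ^ (((m : ℝ) + 2) / 2)) := by
  have hD : (0:ℝ) < 1 - ε := by linarith
  -- Part 1: set equality
  have h1 : E = {q : EuclideanSpace ℝ (Fin (m + 1)) |
      (2 / (1 - ε)) * (∑ i : Fin m, (q i.castSucc) ^ 2)
        + 4 * (q (Fin.last m) + 1 / 2) ^ 2 ≤ 1} := by
    rw [hE]; ext q
    simp only [Set.mem_setOf_eq]
    constructor
    · rintro ⟨p', s, hs0, hs1, hq', hqn⟩
      have hA : ‖p'‖ ^ 2 = ∑ i, p' i ^ 2 := by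
        rw [EuclideanSpace.norm_eq, Real.sq_sqrt (by positivity)]
        simp [Real.norm_eq_abs, sq_abs]
      set A := ∑ i, p' i ^ 2 with hAdef
      have hA0 : 0 ≤ A := by positivity
      rw [hA] at hs1
      have hx : (0:ℝ) < 1 + A / (2 * (1 - ε)) := by positivity
      have h1 : s * (1 + A / (2 * (1 - ε))) ≤ 1 := by
        calc s * (1 + A / (2 * (1 - ε)))
            ≤ (1 + A / (2 * (1 - ε)))⁻¹ * (1 + A / (2 * (1 - ε))) :=
              mul_le_mul_of_nonneg_right hs1 hx.le
          _ = 1 := inv_mul_cancel₀ hx.ne'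
      have hsum : ∑ i : Fin m, q i.castSucc ^ 2 = s ^ 2 * A := by
        simp only [hq', mul_pow, ← Finset.mul_sum, hAdef]
      rw [hsum, hqn]
      have hB0 : 0 ≤ A / (1 - ε) := by positivity
      have h1' : s * (1 + (A / (1 - ε)) / 2) ≤ 1 := by
        rw [div_div, show (1 - ε) * 2 = 2 * (1 - ε) by ring]; exact h1
      have e1 : (2 / (1 - ε)) * (s ^ 2 * A) = 2 * s ^ 2 * (A / (1 - ε)) := by ring
      rw [e1]
      nlinarith [mul_le_mul_of_nonneg_left h1' hs0, sq_nonneg s,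
        mul_nonneg (mul_nonneg hs0 hs0) hB0]
    · intro hq
      set a := ∑ i : Fin m, q i.castSucc ^ 2 with hadef
      set b := q (Fin.last m) with hbdef
      have ha0 : 0 ≤ a := by positivity
      have h2D : 0 < 2 / (1 - ε) := by positivity
      have hb0 : b ≤ 0 := by nlinarith [mul_nonneg h2D.le ha0]
      rcases eq_or_lt_of_le hb0 with hb | hb
      · -- b = 0
        have ha : a = 0 := by nlinarith [mul_nonneg h2D.le ha0]
        have hqi : ∀ i : Fin m, q i.castSucc = 0 := by
          intro i
          have := (Finset.sum_eq_zero_iff_of_nonneg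
            (fun j _ => sq_nonneg (q j.castSucc))).mp ha i (Finset.mem_univ i)
          exact pow_eq_zero_iff (by norm_num) |>.mp this
        refine ⟨0, 0, le_refl 0, ?_, fun i => by simp [hqi i], by simp [hb]⟩
        have : ‖(0 : EuclideanSpace ℝ (Fin m))‖ = 0 := norm_zero
        rw [this]
        norm_num
      · -- b < 0
        have hs : 0 < -b := neg_pos.mpr hb
        refine ⟨(WithLp.equiv 2 (Fin m → ℝ)).symm (fun i => q i.castSucc / (-b)), -b, hs.le, ?_,
          fun i => ?_, by rw [neg_neg]⟩
        · have hnorm : ‖(WithLp.equiv 2 (Fin m → ℝ)).symm (fun i => q i.castSucc / (-b))‖ ^ 2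
              = a / (-b) ^ 2 := by
            rw [EuclideanSpace.norm_eq, Real.sq_sqrt (by positivity)]
            simp only [WithLp.equiv_symm_apply, PiLp.toLp_apply, Real.norm_eq_abs, sq_abs, div_pow]
            rw [← Finset.sum_div, hadef]
          rw [hnorm]
          have hx : (0:ℝ) < 1 + (a / (-b) ^ 2) / (2 * (1 - ε)) := by positivity
          rw [← one_div, le_div_iff₀ hx]
          have hkey : a / (1 - ε) + 2 * (-b) ^ 2 ≤ 2 * (-b) := by
            have e1 : 2 / (1 - ε) * a = 2 * (a / (1 - ε)) := by ring
            nlinarith [hq]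
          have e2 : (-b) * (1 + (a / (-b) ^ 2) / (2 * (1 - ε)))
              = (-b) + (a / (1 - ε)) / (2 * (-b)) := by
            field_simp [hb.ne, hD.ne']
            ring
          rw [e2]
          have h2b : (0:ℝ) < 2 * (-b) := by linarith
          have hu0 : 0 ≤ a / (1 - ε) := by positivity
          rw [← le_sub_iff_add_le', div_le_iff₀ h2b]
          nlinarith [hkey]
        · rw [WithLp.equiv_symm_apply, PiLp.toLp_apply, mul_comm, div_mul_cancel₀ _ hs.ne']
  refine ⟨h1, ?_⟩
  set r := Real.sqrt ((1 - ε) / 2) with hr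
  have hr0 : 0 < r := Real.sqrt_pos.mpr (by linarith)
  set c : Fin (m + 1) → ℝ := Fin.snoc (fun _ => r) (1 / 2) with hc
  have hcne : ∀ i, c i ≠ 0 := by
    refine Fin.lastCases ?_ ?_
    · simp [hc]
    · intro j; simp [hc, hr0.ne']
  set v : EuclideanSpace ℝ (Fin (m + 1)) :=
    (WithLp.equiv 2 (Fin (m + 1) → ℝ)).symm (Fin.snoc (fun _ => (0 : ℝ)) (-(1 / 2))) with hv
  have h2 : E = (fun x => v + diagMap c x) '' Metric.closedBall 0 1 := by
    rw [h1]; ext q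
    rw [mem_image_diag hcne v q]
    simp only [Set.mem_setOf_eq]
    have hsum : ∑ i, ((q i - v i) / c i) ^ 2
        = (2 / (1 - ε)) * (∑ i : Fin m, q i.castSucc ^ 2)
          + 4 * (q (Fin.last m) + 1 / 2) ^ 2 := by
      rw [Fin.sum_univ_castSucc]
      have hlast : ((q (Fin.last m) - v (Fin.last m)) / c (Fin.last m)) ^ 2
          = 4 * (q (Fin.last m) + 1 / 2) ^ 2 := by
        have hvl : v (Fin.last m) = -(1 / 2) := by
          simp [hv, WithLp.equiv_symm_apply, PiLp.toLp_apply]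
        have hcl : c (Fin.last m) = 1 / 2 := by simp [hc]
        rw [hvl, hcl]
        ring
      have hcast : ∀ i : Fin m, ((q i.castSucc - v i.castSucc) / c i.castSucc) ^ 2
          = (2 / (1 - ε)) * q i.castSucc ^ 2 := by
        intro i
        have hv0 : v i.castSucc = 0 := by
          simp [hv, WithLp.equiv_symm_apply, PiLp.toLp_apply]
        have hcc : c i.castSucc = r := by simp [hc]
        rw [hv0, hcc, sub_zero, div_pow, hr,
          Real.sq_sqrt (by linarith : (0:ℝ) ≤ (1 - ε) / 2)]
        field_simp
      rw [Finset.sum_congr rfl (fun i _ => hcast i), hlast, ← Finset.mul_sum]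
    rw [hsum]
  rw [h2]
  have h3 : (fun x => v + diagMap c x) '' Metric.closedBall 0 1
      = v +ᵥ (⇑(diagMap c) '' Metric.closedBall 0 1) := by
    rw [← Set.image_image (fun y => v + y) (⇑(diagMap c))]
    ext x
    constructor
    · rintro ⟨y, hy, rfl⟩; exact ⟨y, hy, rfl⟩
    · rintro ⟨y, hy, rfl⟩; exact ⟨y, hy, rfl⟩
  rw [h3, measure_vadd, Measure.addHaar_image_linearMap, det_diagMap,
    Measure.addHaar_closedBall_eq_addHaar_ball]
  have hprod : ∏ i, c i = r ^ m * (1 / 2) := by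
    rw [Fin.prod_univ_castSucc]
    simp [hc]
  rw [hprod, abs_of_nonneg (by positivity : (0:ℝ) ≤ r ^ m * (1 / 2))]
  set V := volume (Metric.ball (0 : EuclideanSpace ℝ (Fin (m + 1))) 1) with hV
  have hVne : V ≠ ⊤ := measure_ball_lt_top.ne
  have h2m : (0:ℝ) < (2:ℝ) ^ ((m : ℝ) / 2) := Real.rpow_pos_of_pos two_pos _
  have hreq : (1 - ε) ^ ((m : ℝ) / 2) / 2 ^ (((m : ℝ) + 2) / 2) = r ^ m * (1 / 2) := by
    have hrm : r ^ m = (1 - ε) ^ ((m : ℝ) / 2) / 2 ^ ((m : ℝ) / 2) := by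
      rw [hr, Real.sqrt_eq_rpow, ← Real.rpow_natCast (((1 - ε) / 2) ^ ((1:ℝ)/2)) m,
        ← Real.rpow_mul (by linarith : (0:ℝ) ≤ (1 - ε) / 2),
        Real.div_rpow (by linarith : (0:ℝ) ≤ 1 - ε) (by norm_num : (0:ℝ) ≤ 2),
        show (1:ℝ) / 2 * (m:ℝ) = (m:ℝ) / 2 by ring]
    have h2exp : (2:ℝ) ^ (((m : ℝ) + 2) / 2) = 2 ^ ((m : ℝ) / 2) * 2 := by
      rw [show ((m : ℝ) + 2) / 2 = (m : ℝ) / 2 + 1 by ring, Real.rpow_add two_pos,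
        Real.rpow_one]
    rw [hrm, h2exp]
    field_simp
  rw [← hreq]
  have hnn : (0:ℝ) ≤ (1 - ε) ^ ((m : ℝ) / 2) / 2 ^ (((m : ℝ) + 2) / 2) := by positivity
  rw [show (1 - ε) ^ ((m : ℝ) / 2) * V.toReal / 2 ^ (((m : ℝ) + 2) / 2)
      = ((1 - ε) ^ ((m : ℝ) / 2) / 2 ^ (((m : ℝ) + 2) / 2)) * V.toReal by ring,
    ENNReal.ofReal_mul hnn, ENNReal.ofReal_toReal hVne]
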